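/- Let Φ be a finite reduced crystallographic root system in a finite-dimensional real vector space, and let Δ be a base of Φ with associated set of positive roots Φ⁺ (the roots expressible as nonnegative integer combinations of elements of Δ). Then there exists a total (linear) order < on Φ⁺ which is compatible, meaning: (1) whenever λ, μ ∈ Φ⁺ with λ < μ and λ + μ ∈ Φ, then λ + μ ∈ Φ⁺ and λ < λ + μ < μ; and (2) whenever λ, μ ∈ Φ⁺ and λ + μ ∈ Φ⁺, then at least one of λ, μ precedes λ + μ in the order. -/

import Mathlib

open Finset

lemma exists_dual_ne_zero_on_finset' {V : Type*} [NormedAddCommGroup V]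
    [InnerProductSpace ℝ V] (S : Finset V) :
    ∃ g : V →ₗ[ℝ] ℝ, ∀ v ∈ S, v ≠ 0 → g v ≠ 0 := by
  classical
  induction S using Finset.induction_on with
  | empty => exact ⟨0, fun v hv => absurd hv (Finset.notMem_empty v)⟩
  | @insert v S hvS ih =>
    obtain ⟨g, hg⟩ := ih
    by_cases hv0 : v = 0
    · refine ⟨g, fun w hw hw0 => ?_⟩
      rcases Finset.mem_insert.mp hw with rfl | hw
      · exact absurd hv0 hw0
      · exact hg w hw hw0
    · obtain ⟨h, hhv⟩ : ∃ h : V →ₗ[ℝ] ℝ, h v ≠ 0 :=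
        ⟨innerₛₗ ℝ v, by simpa using (inner_self_ne_zero (𝕜 := ℝ) (x := v)).mpr hv0⟩
      set T : Finset ℝ := (insert v S).image (fun w => -g w / h w) with hT
      obtain ⟨t, ht⟩ := Infinite.exists_notMem_finset T
      refine ⟨g + t • h, fun w hw hw0 => ?_⟩
      simp only [LinearMap.add_apply, LinearMap.smul_apply, smul_eq_mul]
      by_cases hhw : h w = 0
      · rcases Finset.mem_insert.mp hw with rfl | hw'
        · exact absurd hhw hhv
        · simpa [hhw] using hg w hw' hw0
      · intro heq
        apply ht
        rw [hT]
        refine Finset.mem_image.mpr ⟨w, hw, ?_⟩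
        rw [div_eq_iff hhw]
        linarith

/-- Corollary 2.1 of the paper (deduced from Papi's theorem): the set of positive
roots of a finite reduced crystallographic root system admits a compatible ordering,
i.e. a total order `<` on `Φ⁺` such that (1) if `λ < μ` and `λ + μ` is a root then
`λ + μ ∈ Φ⁺` and `λ < λ + μ < μ`, and (2) if `λ, μ, λ + μ ∈ Φ⁺` then one of `λ, μ`
precedes `λ + μ`. -/
theorem exists_compatible_ordering_on_positive_roots
    {V : Type*} [NormedAddCommGroup V] [InnerProductSpace ℝ V] [FiniteDimensional ℝ V]
    (Φ : Finset V)
    -- `Φ` spans `V`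
    (hspan : Submodule.span ℝ (Φ : Set V) = ⊤)
    -- `0` is not a root
    (h0 : (0 : V) ∉ Φ)
    -- reduced: the only multiples of a root `α` which are roots are `±α`
    (hred : ∀ α ∈ Φ, ∀ t : ℝ, t • α ∈ Φ → t = 1 ∨ t = -1)
    -- `Φ` is stable under the reflection in each root
    (hrefl : ∀ α ∈ Φ, ∀ β ∈ Φ, β - ((2 * (inner ℝ β α : ℝ) / (inner ℝ α α : ℝ)) • α) ∈ Φ)
    -- crystallographic: the Cartan numbers are integers
    (hcrys : ∀ α ∈ Φ, ∀ β ∈ Φ, ∃ n : ℤ, 2 * (inner ℝ β α : ℝ) / (inner ℝ α α : ℝ) = (n : ℝ))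
    -- `Δ` is a base of `Φ`, `Φpos` the associated set of positive roots
    (Δ : Finset V) (hΔ : Δ ⊆ Φ)
    (hind : LinearIndependent ℝ (fun δ : Δ => (δ : V)))
    (Φpos : Finset V)
    (hpos : ∀ α, α ∈ Φpos ↔ α ∈ Φ ∧ ∃ c : V → ℕ, α = ∑ δ ∈ Δ, (c δ : ℝ) • δ)
    (hbase : ∀ α ∈ Φ, α ∈ Φpos ∨ -α ∈ Φpos) :
    ∃ lt : V → V → Prop,
      -- `lt` is a strict total order on `Φpos`
      (∀ l ∈ Φpos, ¬ lt l l) ∧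
      (∀ l ∈ Φpos, ∀ m ∈ Φpos, ∀ n ∈ Φpos, lt l m → lt m n → lt l n) ∧
      (∀ l ∈ Φpos, ∀ m ∈ Φpos, l ≠ m → lt l m ∨ lt m l) ∧
      -- compatibility condition (1)
      (∀ l ∈ Φpos, ∀ m ∈ Φpos, lt l m → l + m ∈ Φ →
        l + m ∈ Φpos ∧ lt l (l + m) ∧ lt (l + m) m) ∧
      -- compatibility condition (2)
      (∀ l ∈ Φpos, ∀ m ∈ Φpos, l + m ∈ Φpos → lt l (l + m) ∨ lt m (l + m)) := by
  classical
  -- linear independence in sum form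
  have hli : ∀ r : V → ℝ, (∑ δ ∈ Δ, r δ • δ) = 0 → ∀ δ ∈ Δ, r δ = 0 := by
    intro r hr δ hδ
    have h1 : ∑ d : ↥Δ, r (d : V) • (d : V) = 0 := by
      rw [Finset.sum_coe_sort Δ (fun x => r x • x)]; exact hr
    exact Fintype.linearIndependent_iff.mp hind (fun d => r (d : V)) h1 ⟨δ, hδ⟩
  -- Δ spans V
  have hΔspan : Submodule.span ℝ (Δ : Set V) = ⊤ := by
    rw [eq_top_iff, ← hspan, Submodule.span_le]
    intro α hα
    have key : ∀ β ∈ Φpos, β ∈ Submodule.span ℝ (Δ : Set V) := by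
      intro β hβ
      obtain ⟨-, c, hc⟩ := (hpos β).mp hβ
      rw [hc]
      exact Submodule.sum_mem _ fun δ hδ =>
        Submodule.smul_mem _ _ (Submodule.subset_span hδ)
    rcases hbase α hα with h | h
    · exact key α h
    · have := key _ h
      simpa using Submodule.neg_mem _ this
  -- the basis
  have hbspan : ⊤ ≤ Submodule.span ℝ (Set.range fun δ : Δ => (δ : V)) := by
    have hr : Set.range (fun δ : Δ => (δ : V)) = (Δ : Set V) := Subtype.range_coe
    rw [hr]; exact le_of_eq hΔspan.symm
  set b : Module.Basis Δ ℝ V := Module.Basis.mk hind hbspan with hb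
  set f : V →ₗ[ℝ] ℝ := ∑ δ : ↥Δ, b.coord δ with hfdef
  have hfδ : ∀ δ ∈ Δ, f δ = 1 := by
    intro δ hδ
    have hbd : (δ : V) = b ⟨δ, hδ⟩ := (Module.Basis.mk_apply hind hbspan ⟨δ, hδ⟩).symm
    rw [hfdef, LinearMap.sum_apply, hbd]
    simp [Module.Basis.coord_apply, Module.Basis.repr_self, Finsupp.single_apply]
  have hfval : ∀ (c : V → ℕ) (α : V), α = ∑ δ ∈ Δ, (c δ : ℝ) • δ →
      f α = ∑ δ ∈ Δ, (c δ : ℝ) := by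
    intro c α hα
    rw [hα, map_sum]
    refine Finset.sum_congr rfl fun δ hδ => ?_
    rw [map_smul, smul_eq_mul, hfδ δ hδ, mul_one]
  have hΦ : ∀ l ∈ Φpos, l ∈ Φ := fun l hl => ((hpos l).mp hl).1
  have hne0 : ∀ l ∈ Φpos, l ≠ 0 := fun l hl h => h0 (h ▸ hΦ l hl)
  have hfpos : ∀ l ∈ Φpos, 0 < f l := by
    intro l hl
    obtain ⟨hlΦ, c, hc⟩ := (hpos l).mp hl
    rw [hfval c l hc]
    rcases (Finset.sum_nonneg (fun δ _ => by positivity : ∀ δ ∈ Δ, (0:ℝ) ≤ (c δ : ℝ))).lt_or_eq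
      with h | h
    · exact h
    · exfalso
      apply hne0 l hl
      rw [hc]
      refine Finset.sum_eq_zero fun δ hδ => ?_
      have : (c δ : ℝ) = 0 := by
        have := (Finset.sum_eq_zero_iff_of_nonneg
          (fun δ _ => by positivity : ∀ δ ∈ Δ, (0:ℝ) ≤ (c δ : ℝ))).mp h.symm δ hδ
        exact this
      rw [this, zero_smul]
  -- sum closure
  have hsum : ∀ l ∈ Φpos, ∀ m ∈ Φpos, l + m ∈ Φ → l + m ∈ Φpos := by
    intro l hl m hm hlm
    obtain ⟨hlΦ, a, ha⟩ := (hpos l).mp hl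
    obtain ⟨hmΦ, c, hc⟩ := (hpos m).mp hm
    have hrep : l + m = ∑ δ ∈ Δ, ((a δ + c δ : ℕ) : ℝ) • δ := by
      rw [ha, hc, ← Finset.sum_add_distrib]
      refine Finset.sum_congr rfl fun δ _ => ?_
      push_cast
      rw [add_smul]
    rcases hbase _ hlm with h | h
    · exact h
    · exfalso
      obtain ⟨-, e, he⟩ := (hpos _).mp h
      have hzero : ∑ δ ∈ Δ, ((a δ + c δ + e δ : ℕ) : ℝ) • δ = 0 := by
        have h1 : (∑ δ ∈ Δ, ((a δ + c δ : ℕ) : ℝ) • δ) + ∑ δ ∈ Δ, ((e δ : ℕ) : ℝ) • δ = 0 := by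
          rw [← hrep, ← he]; exact add_neg_cancel _
        rw [← Finset.sum_add_distrib] at h1
        rw [← h1]
        refine Finset.sum_congr rfl fun δ _ => ?_
        push_cast
        module
      apply hne0 l hl
      rw [ha]
      refine Finset.sum_eq_zero fun δ hδ => ?_
      have h1 : ((a δ + c δ + e δ : ℕ) : ℝ) = 0 :=
        hli (fun v => ((a v + c v + e v : ℕ) : ℝ)) hzero δ hδ
      have h2 : a δ + c δ + e δ = 0 := by exact_mod_cast h1
      have : a δ = 0 := by omega
      rw [this]
      simp
  -- distinct positive roots have distinct "rays"
  have hray : ∀ l ∈ Φpos, ∀ m ∈ Φpos, l ≠ m → f m • l - f l • m ≠ 0 := by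
    intro l hl m hm hne h
    have hfm := hfpos m hm
    have hfl := hfpos l hl
    have hl' : l = (f l / f m) • m := by
      have : f m • l = f l • m := by linear_combination (norm := module) h
      rw [div_eq_mul_inv, mul_comm, mul_smul, ← this, inv_smul_smul₀ (ne_of_gt hfm)]
    have := hred m (hΦ m hm) (f l / f m) (by rw [← hl']; exact hΦ l hl)
    rcases this with h1 | h1
    · apply hne
      rw [hl', h1, one_smul]
    · have : (0:ℝ) < f l / f m := div_pos hfl hfm
      rw [h1] at this
      linarith
  -- choose generic functional g
  set S : Finset V := (Φpos ×ˢ Φpos).image (fun p => f p.2 • p.1 - f p.1 • p.2) with hS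
  obtain ⟨g, hg⟩ := exists_dual_ne_zero_on_finset' S
  have hgne : ∀ l ∈ Φpos, ∀ m ∈ Φpos, l ≠ m → g l * f m ≠ g m * f l := by
    intro l hl m hm hne heq
    have hmem : f m • l - f l • m ∈ S := by
      rw [hS]
      exact Finset.mem_image.mpr ⟨(l, m), Finset.mem_product.mpr ⟨hl, hm⟩, rfl⟩
    have := hg _ hmem (hray l hl m hm hne)
    apply this
    rw [map_sub, map_smul, map_smul, smul_eq_mul, smul_eq_mul]
    linarith [heq]
  refine ⟨fun a c => g a * f c < g c * f a, ?_, ?_, ?_, ?_, ?_⟩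
  · intro l _; exact lt_irrefl _
  · intro l hl m hm n hn h1 h2
    have fl := hfpos l hl; have fm := hfpos m hm; have fn := hfpos n hn
    rw [← div_lt_div_iff₀ fl fm] at h1
    rw [← div_lt_div_iff₀ fm fn] at h2
    rw [← div_lt_div_iff₀ fl fn]
    linarith
  · intro l hl m hm hne
    rcases lt_or_gt_of_ne (hgne l hl m hm hne) with h | h
    · exact Or.inl h
    · exact Or.inr h
  · intro l hl m hm hlt hlm
    have hmem := hsum l hl m hm hlm
    have hga : g (l + m) = g l + g m := map_add g l m
    have hfa : f (l + m) = f l + f m := map_add f l m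
    refine ⟨hmem, ?_, ?_⟩
    · show g l * f (l + m) < g (l + m) * f l
      rw [hga, hfa]
      nlinarith [hfpos l hl, hfpos m hm]
    · show g (l + m) * f m < g m * f (l + m)
      rw [hga, hfa]
      nlinarith [hfpos l hl, hfpos m hm]
  · intro l hl m hm hlm
    have hne : l ≠ m := by
      intro h
      subst h
      have h2 : (2 : ℝ) • l ∈ Φ := by
        rw [two_smul]; exact hΦ _ hlm
      rcases hred l (hΦ l hl) 2 h2 with h | h <;> norm_num at h
    have hgl := map_add g l m
    have hfl := map_add f l m
    rcases lt_or_gt_of_ne (hgne l hl m hm hne) with h | h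
    · left
      show g l * f (l + m) < g (l + m) * f l
      rw [hgl, hfl]; nlinarith [hfpos l hl, hfpos m hm]
    · right
      show g m * f (l + m) < g (l + m) * f m
      rw [hgl, hfl]; nlinarith [hfpos l hl, hfpos m hm]
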